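/- Let S ⊆ ℤ^r be a finite set that is integrally poised for polynomials of degree n+1, i.e., there exist functions c_a : ℤ^r → ℤ (a ∈ S) such that f(x) = Σ_{a ∈ S} c_a(x) f(a) for every polynomial f ∈ ℚ[x₁,…,x_r] of total degree at most n+1 with f(ℤ^r) ⊆ ℤ and every x ∈ ℤ^r. If g ∈ ℚ[x₁,…,x_r] is a polynomial of total degree at most n with g(ℤ^r) ⊆ ℤ, then the subgroup of ℤ^r generated by { g(x)·x : x ∈ ℤ^r } is equal to the subgroup of ℤ^r generated by { g(x)·x : x ∈ S }. -/
import Mathlib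


open Finset

/-- **Proposition (poised sets and generating sets).**
Suppose `S ⊆ ℤ^r` is a finite set that is integrally poised for polynomials of degree
`n+1`, witnessed by the family `c_a : ℤ^r → ℤ` (`a ∈ S`).  If `g` is a polynomial of
total degree at most `n` taking integer values on `ℤ^r` (with integer value function
`gval`), then the subgroup of `ℤ^r` generated by `{ g(x)·x : x ∈ ℤ^r }` equals the
subgroup generated by `{ g(x)·x : x ∈ S }`. -/
theorem poised_generators (r n : ℕ) (S : Finset (Fin r → ℤ))
    (c : (Fin r → ℤ) → (Fin r → ℤ) → ℤ)
    (hpoised : ∀ f : MvPolynomial (Fin r) ℚ, f.totalDegree ≤ n + 1 →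
      (∀ x : Fin r → ℤ, ∃ m : ℤ, MvPolynomial.eval (fun i => (x i : ℚ)) f = m) →
      ∀ x : Fin r → ℤ,
        MvPolynomial.eval (fun i => (x i : ℚ)) f =
          ∑ a ∈ S, (c a x : ℚ) * MvPolynomial.eval (fun i => (a i : ℚ)) f)
    (g : MvPolynomial (Fin r) ℚ) (hgdeg : g.totalDegree ≤ n)
    (gval : (Fin r → ℤ) → ℤ)
    (hgval : ∀ x : Fin r → ℤ, (gval x : ℚ) = MvPolynomial.eval (fun i => (x i : ℚ)) g) :
    AddSubgroup.closure {v : Fin r → ℤ | ∃ x : Fin r → ℤ, v = gval x • x} =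
      AddSubgroup.closure {v : Fin r → ℤ | ∃ x ∈ S, v = gval x • x} := by
  apply le_antisymm
  · rw [AddSubgroup.closure_le]
    rintro v ⟨x, rfl⟩
    have heq : gval x • x = ∑ a ∈ S, c a x • (gval a • a) := by
      funext i
      have hdeg : (MvPolynomial.X i * g).totalDegree ≤ n + 1 := by
        calc (MvPolynomial.X i * g).totalDegree
            ≤ (MvPolynomial.X i).totalDegree + g.totalDegree :=
              MvPolynomial.totalDegree_mul _ _
          _ ≤ 1 + n := by rw [MvPolynomial.totalDegree_X]; omega
          _ = n + 1 := by omega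
      have hint : ∀ y : Fin r → ℤ, ∃ m : ℤ,
          MvPolynomial.eval (fun j => (y j : ℚ)) (MvPolynomial.X i * g) = m := by
        intro y
        exact ⟨y i * gval y, by push_cast [hgval y]; simp⟩
      have key := hpoised _ hdeg hint x
      simp only [map_mul, MvPolynomial.eval_X] at key
      have : ((gval x * x i : ℤ) : ℚ) = ((∑ a ∈ S, c a x * (gval a * a i) : ℤ) : ℚ) := by
        push_cast
        simp_rw [hgval]
        calc (MvPolynomial.eval (fun j => (x j : ℚ)) g) * (x i : ℚ)
            = (x i : ℚ) * MvPolynomial.eval (fun j => (x j : ℚ)) g := by ring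
          _ = ∑ a ∈ S, (c a x : ℚ) * ((a i : ℚ) * MvPolynomial.eval (fun j => (a j : ℚ)) g) := key
          _ = ∑ a ∈ S, (c a x : ℚ) * (MvPolynomial.eval (fun j => (a j : ℚ)) g * (a i : ℚ)) := by
              apply Finset.sum_congr rfl; intros; ring
      have h2 : gval x * x i = ∑ a ∈ S, c a x * (gval a * a i) := by
        exact_mod_cast this
      simpa [Finset.sum_apply, mul_assoc] using h2
    rw [heq]
    apply AddSubgroup.sum_mem
    intro a ha
    apply AddSubgroup.zsmul_mem
    apply AddSubgroup.subset_closure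
    exact ⟨a, ha, rfl⟩
  · rw [AddSubgroup.closure_le]
    rintro v ⟨x, hx, rfl⟩
    exact AddSubgroup.subset_closure ⟨x, rfl⟩
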